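/- Let X be a metrisable topological space. Then X is σ-locally compact if and only if there exists a metric on X compatible with its topology for which every closed bounded subset is compact. -/

import Mathlib

open Set Topology

/-- In a locally compact, σ-compact metric space there is a continuous real-valued function
whose sublevel sets are contained in compact sets. -/
theorem exists_proper_real_aux (X : Type*) [MetricSpace X] [LocallyCompactSpace X]
    [SigmaCompactSpace X] :
    ∃ f : X → ℝ, Continuous f ∧ ∀ r : ℝ, ∃ K : Set X, IsCompact K ∧ {x | f x ≤ r} ⊆ K := by
  rcases isEmpty_or_nonempty X with hX | hX
  · exact ⟨0, continuous_const, fun r => ⟨∅, isCompact_empty, fun x _ => (IsEmpty.false x).elim⟩⟩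
  obtain ⟨x0⟩ := hX
  set K0 := CompactExhaustion.choice X with hK0
  obtain ⟨n0, hx0⟩ := K0.exists_mem x0
  -- shift the exhaustion so that every set is nonempty
  set K : CompactExhaustion X :=
    ⟨fun n => K0 (n0 + n), fun n => K0.isCompact _,
      fun n => K0.subset_interior_succ (n0 + n),
      iUnion_eq_univ_iff.2 fun x =>
        ⟨K0.find x, K0.subset (Nat.le_add_left _ _) (K0.mem_find x)⟩⟩ with hK
  -- Urysohn functions
  have hdis : ∀ n : ℕ, Disjoint (K n) (interior (K (n + 1)))ᶜ := fun n =>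
    disjoint_compl_right_iff_subset.2 (K.subset_interior_succ n)
  have hu : ∀ n : ℕ, ∃ u : C(X, ℝ), EqOn u 0 (K n) ∧ EqOn u 1 (interior (K (n + 1)))ᶜ ∧
      ∀ x, u x ∈ Icc (0 : ℝ) 1 := fun n =>
    exists_continuous_zero_one_of_isClosed (K.isCompact n).isClosed
      isOpen_interior.isClosed_compl (hdis n)
  choose u hu0 hu1 hu01 using hu
  have hu_zero : ∀ {n N : ℕ} {x : X}, x ∈ K N → N ≤ n → u n x = 0 := by
    intro n N x hx hn
    have := hu0 n (K.subset hn hx)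
    simpa using this
  set f : X → ℝ := fun x => ∑' n, u n x with hf
  have key1 : ∀ (N : ℕ) (x : X), x ∈ K N → f x = ∑ n ∈ Finset.range N, u n x := by
    intro N x hx
    refine tsum_eq_sum fun n hn => ?_
    exact hu_zero hx (by simpa using hn)
  have hsum : ∀ x : X, Summable fun n => u n x := by
    intro x
    obtain ⟨M, hM⟩ := K.exists_mem x
    exact summable_of_ne_finset_zero (s := Finset.range M)
      fun n hn => hu_zero hM (by simpa using hn)
  refine ⟨f, ?_, ?_⟩
  · rw [continuous_iff_continuousAt]
    intro x
    obtain ⟨N, hN⟩ := K.exists_mem_nhds x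
    have hcongr : f =ᶠ[𝓝 x] fun y => ∑ n ∈ Finset.range N, u n y :=
      Filter.eventuallyEq_of_mem hN fun y hy => key1 N y hy
    exact ((continuous_finset_sum _ fun n _ => (u n).continuous).continuousAt).congr hcongr.symm
  · intro r
    refine ⟨K (⌈r⌉₊ + 1), K.isCompact _, fun x hx => ?_⟩
    by_contra hxK
    have h1 : ∀ n ∈ Finset.range (⌈r⌉₊ + 1), u n x = 1 := by
      intro n hn
      have hn' : n + 1 ≤ ⌈r⌉₊ + 1 := by
        exact Nat.succ_le_succ (Nat.lt_succ_iff.mp (Finset.mem_range.1 hn))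
      have hxmem : x ∈ (interior (K (n + 1)))ᶜ := by
        intro hmem
        exact hxK (K.subset hn' (interior_subset hmem))
      have := hu1 n hxmem
      simpa using this
    have hle : (∑ n ∈ Finset.range (⌈r⌉₊ + 1), u n x) ≤ f x :=
      Summable.sum_le_tsum _ (fun n _ => (hu01 n x).1) (hsum x)
    have hsum1 : (∑ n ∈ Finset.range (⌈r⌉₊ + 1), u n x) = (⌈r⌉₊ + 1 : ℝ) := by
      rw [Finset.sum_congr rfl h1]
      simp
    have : (⌈r⌉₊ + 1 : ℝ) ≤ r := by
      calc (⌈r⌉₊ + 1 : ℝ) = ∑ n ∈ Finset.range (⌈r⌉₊ + 1), u n x := hsum1.symm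
        _ ≤ f x := hle
        _ ≤ r := hx
    have : r < (⌈r⌉₊ + 1 : ℝ) := lt_of_le_of_lt (Nat.le_ceil r) (by norm_num)
    linarith

theorem sigmaLocallyCompact_iff_heineBorel_metric
    {X : Type*} [t : TopologicalSpace X] [TopologicalSpace.MetrizableSpace X] :
    (LocallyCompactSpace X ∧ SigmaCompactSpace X) ↔
      ∃ m : MetricSpace X, m.toUniformSpace.toTopologicalSpace = t ∧
        ∀ s : Set X, IsClosed s →
          (∃ C : ℝ, ∀ x ∈ s, ∀ y ∈ s, m.dist x y ≤ C) → IsCompact s := by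
  constructor
  · rintro ⟨hl, hs⟩
    obtain ⟨m, hm⟩ := (⟨TopologicalSpace.metrizableSpaceMetric X, rfl⟩ :
      ∃ m : MetricSpace X, m.toUniformSpace.toTopologicalSpace = t)
    subst hm
    letI := m
    obtain ⟨f, hfc, hfp⟩ := exists_proper_real_aux X
    set F : X → X × ℝ := fun x => (x, f x) with hF
    have hFinj : Function.Injective F := fun a b h => congrArg Prod.fst h
    have hFemb : Topology.IsEmbedding F := isEmbedding_graph hfc
    refine ⟨MetricSpace.induced F hFinj inferInstance, ?_, ?_⟩
    · show (UniformSpace.comap F _).toTopologicalSpace = _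
      rw [UniformSpace.toTopologicalSpace_comap]
      exact hFemb.eq_induced.symm
    · rintro s hsc ⟨C, hC⟩
      rcases s.eq_empty_or_nonempty with rfl | ⟨y0, hy0⟩
      · exact isCompact_empty
      obtain ⟨Kc, hKc, hKsub⟩ := hfp (f y0 + C)
      refine hKc.of_isClosed_subset hsc fun x hx => hKsub ?_
      have hdist : dist (F x) (F y0) ≤ C := hC x hx y0 hy0
      have : |f x - f y0| ≤ C := by
        have h2 : dist (f x) (f y0) ≤ dist (F x) (F y0) := le_max_right _ _
        calc |f x - f y0| = dist (f x) (f y0) := (Real.dist_eq _ _).symm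
          _ ≤ C := h2.trans hdist
      have h3 : f x - f y0 ≤ C := (abs_le.1 this).2
      show f x ≤ f y0 + C
      linarith
  · rintro ⟨m, hm, hHB⟩
    subst hm
    letI := m
    haveI : ProperSpace X := by
      constructor
      intro x r
      refine hHB _ Metric.isClosed_closedBall ⟨2 * r + 2 * |r|, ?_⟩
      intro a ha b hb
      have ha' : dist a x ≤ r := Metric.mem_closedBall.1 ha
      have hb' : dist b x ≤ r := Metric.mem_closedBall.1 hb
      have := dist_triangle a x b
      have hxr : dist x b = dist b x := dist_comm x b
      nlinarith [abs_nonneg r, le_abs_self r, dist_nonneg (x := a) (y := b)]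
    exact ⟨inferInstance, inferInstance⟩
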